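/- Let TS be a deterministic semantic labeled transition system with total transition relation, and fix a ∀^l∃^(k−l) hyperproperty specification φ̂ given by ψ, (ξ i), φ. If TS ⊨g φ̂ (the verifier has a winning memoryless strategy in the verification game G(TS, φ̂)), then TS ⊨ φ̂ under the ∀∃ trace semantics. -/

import Mathlib

/-- A semantic labeled transition system with a total transition relation. -/
structure LTS (S L : Type*) where
  Init : Set S
  Tr : S → L → S → Prop
  total : ∀ s, ∃ ℓ s', Tr s ℓ s'

/-- `t` is a trace of `T` starting from `s`. -/
def LTS.IsTrace {S L : Type*} (T : LTS S L) (t : ℕ → S) (s : S) : Prop :=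
  t 0 = s ∧ ∀ n, ∃ ℓ, T.Tr (t n) ℓ (t (n + 1))

/-- The trace `t` has at least `j + 1` observation points with respect to `ξ`. -/
def HasObsUpTo {S : Type*} (ξ : S → Prop) (t : ℕ → S) (j : ℕ) : Prop :=
  ∃ f : Fin (j + 1) → ℕ, StrictMono f ∧ ∀ i, ξ (t (f i))

/-- The `j`-th observation state of the trace `t` with respect to `ξ`:
`t n_j` where `n_j` is the `j`-th smallest element of `{n | ξ (t n)}`. -/
noncomputable def obsState {S : Type*} (ξ : S → Prop) (t : ℕ → S) (j : ℕ) : S :=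
  t (Nat.nth (fun n => ξ (t n)) j)

/-- `TS ⊨ φ̂` for the `k`-safety specification given by `ψ`, `ξ`, `φ`. -/
def kSafetyModels {S L : Type*} (T : LTS S L) {k : ℕ} (ψ : (Fin k → S) → Prop)
    (ξ : Fin k → S → Prop) (φ : (Fin k → S) → Prop) : Prop :=
  ∀ sb : Fin k → S, (∀ i, sb i ∈ T.Init) → ψ sb →
    ∀ t : Fin k → ℕ → S, (∀ i, T.IsTrace (t i) (sb i)) →
      ∀ j : ℕ, (∀ i, HasObsUpTo (ξ i) (t i) j) →
        φ (fun i => obsState (ξ i) (t i) j)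

/-- `s̄ ↝[M,ℓ̄] s̄'`: the composed step with schedule `M` and labels `ℓ̄`. -/
def ComposedStep {S L : Type*} (T : LTS S L) {k : ℕ} (M : Set (Fin k)) (ℓ : Fin k → L)
    (sb sb' : Fin k → S) : Prop :=
  (∀ i ∈ M, T.Tr (sb i) (ℓ i) (sb' i)) ∧ ∀ i ∉ M, sb' i = sb i

/-- `M` is a valid schedule for the composed state `s̄`. -/
def ValidSched {S : Type*} {k : ℕ} (ξ : Fin k → S → Prop) (M : Set (Fin k))
    (sb : Fin k → S) : Prop :=
  (∀ i ∈ M, ¬ ξ i (sb i)) ∨ (M = Set.univ ∧ ∀ i, ξ i (sb i))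

/-- `Bad s̄`: all traces are at observation points but `φ` fails. -/
def BadState {S : Type*} {k : ℕ} (ξ : Fin k → S → Prop) (φ : (Fin k → S) → Prop)
    (sb : Fin k → S) : Prop :=
  (∀ i, ξ i (sb i)) ∧ ¬ φ sb

/-- A schedule: a nonempty subset of `Fin k`. -/
def Sched (k : ℕ) := {M : Set (Fin k) // M.Nonempty}

/-- Concatenation `ℓ∀·ℓ∃ : Fin k → α` of `a : Fin l → α` and `b : Fin (k - l) → α`. -/
def finSplice {α : Type*} {l k : ℕ} (h : l ≤ k) (a : Fin l → α) (b : Fin (k - l) → α) :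
    Fin k → α :=
  fun i => if h' : (i : ℕ) < l then a ⟨(i : ℕ), h'⟩
           else b ⟨(i : ℕ) - l, by have := i.isLt; omega⟩

/-- Game states: falsifier states (left) and verifier states (right). -/
abbrev GState (k l : ℕ) (S L : Type*) := (Fin k → S) ⊕ ((Fin k → S) × (Fin l → L))

/-- A move of the falsifier: from `s̄` to `(s̄, ℓ∀)` for any `ℓ∀`. -/
def FalsMove {k l : ℕ} {S L : Type*} (g g' : GState k l S L) : Prop :=
  ∃ sb lf, g = Sum.inl sb ∧ g' = Sum.inr (sb, lf)

/-- A move of the verifier: from `(s̄, ℓ∀)` to any `s̄'` with `s̄ ↝[M, ℓ∀·ℓ∃] s̄'`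
for some schedule `M` valid for `s̄` and some `ℓ∃`. -/
def VerMove {S L : Type*} (T : LTS S L) {k l : ℕ} (h : l ≤ k) (ξ : Fin k → S → Prop)
    (g g' : GState k l S L) : Prop :=
  ∃ sb lf sb', g = Sum.inr (sb, lf) ∧ g' = Sum.inl sb' ∧
    ∃ M : Set (Fin k), M.Nonempty ∧ ValidSched ξ M sb ∧
      ∃ le : Fin (k - l) → L, ComposedStep T M (finSplice h lf le) sb sb'

/-- `ρ` is a play of the verification game `G(TS, φ̂)`. -/
def IsPlay {S L : Type*} (T : LTS S L) {k l : ℕ} (h : l ≤ k)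
    (ψ : (Fin k → S) → Prop) (ξ : Fin k → S → Prop) (ρ : ℕ → GState k l S L) : Prop :=
  (∃ sb, ρ 0 = Sum.inl sb ∧ (∀ i, sb i ∈ T.Init) ∧ ψ sb) ∧
  ∀ n, FalsMove (ρ n) (ρ (n + 1)) ∨ VerMove T h ξ (ρ n) (ρ (n + 1))

/-- The play `ρ` follows the memoryless verifier strategy `χ`. -/
def Follows {k l : ℕ} {S L : Type*} (χ : (Fin k → S) × (Fin l → L) → (Fin k → S))
    (ρ : ℕ → GState k l S L) : Prop :=
  ∀ n q, ρ n = Sum.inr q → ρ (n + 1) = Sum.inl (χ q)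

/-- `TS ⊨g φ̂`: the verifier has a winning memoryless strategy in `G(TS, φ̂)`. -/
def ModelsGame {S L : Type*} (T : LTS S L) {k l : ℕ} (h : l ≤ k)
    (ψ : (Fin k → S) → Prop) (ξ : Fin k → S → Prop) (φ : (Fin k → S) → Prop) : Prop :=
  ∃ χ : (Fin k → S) × (Fin l → L) → (Fin k → S),
    (∀ q, VerMove T h ξ (Sum.inr q) (Sum.inl (χ q))) ∧
    ∀ ρ : ℕ → GState k l S L, IsPlay T h ψ ξ ρ → Follows χ ρ →
      ∀ n sb, ρ n = Sum.inl sb → ¬ BadState ξ φ sb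

/-- `TS` is deterministic. -/
def LTS.Deterministic {S L : Type*} (T : LTS S L) : Prop :=
  ∀ s ℓ, ∃! s', T.Tr s ℓ s'

/-- `TS ⊨ φ̂` under the `∀^l ∃^(k-l)` trace semantics. -/
def ModelsAE {S L : Type*} (T : LTS S L) {k l : ℕ} (h : l ≤ k)
    (ψ : (Fin k → S) → Prop) (ξ : Fin k → S → Prop) (φ : (Fin k → S) → Prop) : Prop :=
  ∀ sb : Fin k → S, (∀ i, sb i ∈ T.Init) → ψ sb →
    ∀ tA : Fin l → ℕ → S, (∀ i : Fin l, T.IsTrace (tA i) (sb (Fin.castLE h i))) →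
      ∃ tE : Fin (k - l) → ℕ → S,
        (∀ i : Fin (k - l),
          T.IsTrace (tE i) (sb ⟨l + (i : ℕ), by have := i.isLt; omega⟩)) ∧
        ∀ j : ℕ, (∀ i : Fin k, HasObsUpTo (ξ i) (finSplice h tA tE i) j) →
          φ (fun i => obsState (ξ i) (finSplice h tA tE i) j)

/-- An arbitrary successor of `s`, from totality. -/
noncomputable def LTS.next {S L : Type*} (T : LTS S L) (s : S) : S :=
  (T.total s).choose_spec.choose

lemma LTS.tr_next {S L : Type*} (T : LTS S L) (s : S) :
    ∃ ℓ, T.Tr s ℓ (T.next s) := ⟨_, (T.total s).choose_spec.choose_spec⟩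

open Classical in
/-- The run of the game induced by strategy data `χ`, `M` and falsifier labels `lab`. -/
noncomputable def runAux {S L : Type*} {k l : ℕ} (h : l ≤ k)
    (χ : (Fin k → S) × (Fin l → L) → (Fin k → S))
    (M : (Fin k → S) × (Fin l → L) → Set (Fin k))
    (lab : Fin l → ℕ → L) (sb : Fin k → S) : ℕ → (Fin k → S) × (Fin k → ℕ)
  | 0 => (sb, fun _ => 0)
  | n + 1 =>
      let p := runAux h χ M lab sb n
      let q : (Fin k → S) × (Fin l → L) := (p.1, fun i => lab i (p.2 (Fin.castLE h i)))
      (χ q, fun i => if i ∈ M q then p.2 i + 1 else p.2 i)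

open Classical in
/-- The trace of component `i` extracted from the run. -/
noncomputable def gtr {S L : Type*} (T : LTS S L) {k l : ℕ} (h : l ≤ k)
    (χ : (Fin k → S) × (Fin l → L) → (Fin k → S))
    (M : (Fin k → S) × (Fin l → L) → Set (Fin k))
    (lab : Fin l → ℕ → L) (sb : Fin k → S) (i : Fin k) : ℕ → S
  | 0 => sb i
  | p + 1 =>
      if hp : ∃ n, (runAux h χ M lab sb n).2 i = p + 1
      then (runAux h χ M lab sb (Nat.find hp)).1 i
      else T.next (gtr T h χ M lab sb i p)

theorem game_semantics_sound {S L : Type*} (T : LTS S L)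
    (hdet : T.Deterministic) {k l : ℕ} (h : l ≤ k)
    (ψ : (Fin k → S) → Prop) (ξ : Fin k → S → Prop) (φ : (Fin k → S) → Prop) :
    ModelsGame T h ψ ξ φ → ModelsAE T h ψ ξ φ := by
  classical
  rintro ⟨χ, hχ, hwin⟩
  -- extract strategy data
  have hdata : ∀ q : (Fin k → S) × (Fin l → L), ∃ M : Set (Fin k), M.Nonempty ∧
      ValidSched ξ M q.1 ∧ ∃ le : Fin (k - l) → L,
        ComposedStep T M (finSplice h q.2 le) q.1 (χ q) := by
    intro q
    obtain ⟨sb, lf, sb', h1, h2, Mm, hne, hval, le, hcs⟩ := hχ q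
    injection h1 with h1
    injection h2 with h2
    subst h1
    exact ⟨Mm, hne, hval, le, h2 ▸ hcs⟩
  choose Msel hMne hMval lsel hstep using hdata
  intro sb hinit hψ tA htA
  choose lab hlab using fun (i : Fin l) => (htA i).2
  -- the run
  set R : ℕ → (Fin k → S) × (Fin k → ℕ) := runAux h χ Msel lab sb with hR
  set σ : ℕ → Fin k → S := fun n => (R n).1 with hσ
  set c : ℕ → Fin k → ℕ := fun n => (R n).2 with hc
  set Q : ℕ → (Fin k → S) × (Fin l → L) :=
    fun n => (σ n, fun i => lab i (c n (Fin.castLE h i))) with hQ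
  have hσ0 : σ 0 = sb := rfl
  have hc0 : ∀ i, c 0 i = 0 := fun _ => rfl
  have hRs : ∀ n, R (n + 1) =
      (χ (Q n), fun i => if i ∈ Msel (Q n) then c n i + 1 else c n i) := by
    intro n
    rw [hR, hQ, hσ, hc]
    simp only [runAux]
    rfl
  have hσs : ∀ n, σ (n + 1) = χ (Q n) := by
    intro n; show (R (n+1)).1 = _; rw [hRs n]
  have hcs : ∀ n i, c (n + 1) i = if i ∈ Msel (Q n) then c n i + 1 else c n i := by
    intro n i; show (R (n+1)).2 i = _; rw [hRs n]
  have hk : 0 < k := by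
    obtain ⟨i0, -⟩ := hMne (sb, fun i => lab i 0)
    exact i0.pos
  -- basic step facts
  have hmove : ∀ n i, i ∈ Msel (Q n) →
      T.Tr (σ n i) (finSplice h (Q n).2 (lsel (Q n)) i) (σ (n+1) i) := by
    intro n i hi
    rw [hσs n]
    exact (hstep (Q n)).1 i hi
  have hstay : ∀ n i, i ∉ Msel (Q n) → σ (n+1) i = σ n i ∧ c (n+1) i = c n i := by
    intro n i hi
    refine ⟨?_, ?_⟩
    · rw [hσs n]; exact (hstep (Q n)).2 i hi
    · rw [hcs n i, if_neg hi]
  have hinc : ∀ n i, i ∈ Msel (Q n) ↔ c (n+1) i = c n i + 1 := by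
    intro n i
    constructor
    · intro hi; rw [hcs n i, if_pos hi]
    · intro he
      by_contra hi
      rw [hcs n i, if_neg hi] at he
      omega
  have hcmono : ∀ i, Monotone fun n => c n i := by
    intro i
    apply monotone_nat_of_le_succ
    intro n
    rw [hcs n i]
    split <;> omega
  -- universal components follow tA
  have hsp1 : ∀ {α : Type _} (a : Fin l → α) (b : Fin (k - l) → α) (i' : Fin l),
      finSplice h a b (Fin.castLE h i') = a i' := by
    intro α a b i'
    simp [finSplice]
  have huniv : ∀ n (i' : Fin l), σ n (Fin.castLE h i') = tA i' (c n (Fin.castLE h i')) := by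
    intro n i'
    induction n with
    | zero => rw [hσ0, hc0, (htA i').1]
    | succ n ih =>
      by_cases hi : Fin.castLE h i' ∈ Msel (Q n)
      · have ht1 := hmove n _ hi
        rw [hsp1] at ht1
        rw [ih] at ht1
        have ht2 := hlab i' (c n (Fin.castLE h i'))
        obtain ⟨s', hs', huniq⟩ := hdet (tA i' (c n (Fin.castLE h i'))) (lab i' (c n (Fin.castLE h i')))
        have e1 := huniq _ ht1
        have e2 := huniq _ ht2
        rw [(hinc n _).1 hi, e1, e2]
      · have hst := hstay n _ hi
        rw [hst.1, hst.2, ih]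
  -- state depends only on counter
  have hsame : ∀ i n m, n ≤ m → c n i = c m i → σ n i = σ m i := by
    intro i n m hnm
    induction m, hnm using Nat.le_induction with
    | base => intro _; rfl
    | succ m hm ih =>
      intro hcc
      have h1 : c n i ≤ c m i := hcmono i hm
      by_cases hi : i ∈ Msel (Q m)
      · have := (hinc m i).1 hi
        omega
      · have hst := hstay m i hi
        rw [hst.1]
        exact ih (by omega)
  set gt : Fin k → ℕ → S := gtr T h χ Msel lab sb with hgt
  have hgt0 : ∀ i : Fin k, gt i 0 = sb i := by
    intro i
    rw [hgt, gtr]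
  have hgtsucc : ∀ (i : Fin k) p (hp : ∃ n, c n i = p + 1),
      gt i (p + 1) = σ (Nat.find hp) i := by
    intro i p hp
    have hp' : ∃ n, (runAux h χ Msel lab sb n).2 i = p + 1 := hp
    rw [hgt]
    show gtr T h χ Msel lab sb i (p + 1) = _
    rw [gtr, dif_pos hp']
  have hgtnex : ∀ (i : Fin k) p, ¬ (∃ n, c n i = p + 1) →
      gt i (p + 1) = T.next (gt i p) := by
    intro i p hp
    have hp' : ¬ ∃ n, (runAux h χ Msel lab sb n).2 i = p + 1 := hp
    rw [hgt]
    show gtr T h χ Msel lab sb i (p + 1) = _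
    rw [gtr, dif_neg hp']
  have hgtkey : ∀ (i : Fin k) p n, c n i = p → σ n i = gt i p := by
    intro i p n hn
    cases p with
    | zero =>
      have h0 : σ n i = σ 0 i :=
        (hsame i 0 n (Nat.zero_le n) (by rw [hc0, hn])).symm
      rw [h0, hσ0, hgt0]
    | succ p =>
      have hp : ∃ n', c n' i = p + 1 := ⟨n, hn⟩
      rw [hgtsucc i p hp]
      have h2 : c (Nat.find hp) i = p + 1 := Nat.find_spec hp
      exact (hsame i _ n (Nat.find_min' hp hn) (by rw [h2, hn])).symm
  have hgtrun : ∀ i n, σ n i = gt i (c n i) := fun i n => hgtkey i (c n i) n rfl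
  have hgtr : ∀ i : Fin k, T.IsTrace (gt i) (sb i) := by
    intro i
    refine ⟨hgt0 i, ?_⟩
    intro p
    by_cases hp : ∃ n, c n i = p + 1
    · set n₁ := Nat.find hp with hn₁
      have hfs : c n₁ i = p + 1 := Nat.find_spec hp
      have hne : n₁ ≠ 0 := by
        intro h0
        rw [h0, hc0] at hfs
        omega
      set m := n₁ - 1 with hm
      have hmlt : m < n₁ := by omega
      have hmin : ¬ c m i = p + 1 := Nat.find_min hp hmlt
      have hm1 : m + 1 = n₁ := by omega
      by_cases him : i ∈ Msel (Q m)
      · have hma : c (m + 1) i = c m i + 1 := (hinc m i).1 him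
        have hcm : c m i = p := by rw [hm1] at hma; omega
        have ht := hmove m i him
        rw [hgtkey i p m hcm, hgtkey i (p + 1) (m + 1) (by rw [hm1, hfs])] at ht
        exact ⟨_, ht⟩
      · have hst := (hstay m i him).2
        rw [hm1, hfs] at hst
        exact absurd hst.symm hmin
    · rw [hgtnex i p hp]
      exact T.tr_next _
  -- the existential traces
  set tE : Fin (k - l) → ℕ → S :=
    fun i' => gt ⟨l + (i' : ℕ), by have := i'.isLt; omega⟩ with htE
  set Tr' : Fin k → ℕ → S := fun i => finSplice h tA tE i with hTr'
  have htreq : ∀ n i, σ n i = Tr' i (c n i) := by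
    intro n i
    show σ n i = finSplice h tA tE i (c n i)
    by_cases hi : (i : ℕ) < l
    · have he : Fin.castLE h ⟨(i : ℕ), hi⟩ = i := rfl
      have h1 := huniv n ⟨(i : ℕ), hi⟩
      rw [he] at h1
      rw [h1]
      simp [finSplice, hi]
    · rw [hgtrun i n]
      have he : (⟨l + ((i : ℕ) - l), by have := i.isLt; omega⟩ : Fin k) = i := by
        apply Fin.ext
        simp
        omega
      have h2 : finSplice h tA tE i (c n i)
          = gt ⟨l + ((i : ℕ) - l), by have := i.isLt; omega⟩ (c n i) := by
        simp [finSplice, hi, htE]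
      rw [h2, he]
  -- no bad states along the run
  set play : ℕ → GState k l S L :=
    fun n => if n % 2 = 0 then Sum.inl (σ (n / 2)) else Sum.inr (Q (n / 2)) with hplay
  have hpe : ∀ m, play (m + m) = Sum.inl (σ m) := by
    intro m
    have e1 : (m + m) % 2 = 0 := by omega
    have e2 : (m + m) / 2 = m := by omega
    simp [hplay, e1, e2]
  have hpo : ∀ m, play (2 * m + 1) = Sum.inr (Q m) := by
    intro m
    have e1 : ¬ (2 * m + 1) % 2 = 0 := by omega
    have e2 : (2 * m + 1) / 2 = m := by omega
    simp [hplay, e1, e2]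
  have hisplay : IsPlay T h ψ ξ play := by
    constructor
    · refine ⟨sb, ?_, hinit, hψ⟩
      have := hpe 0
      rw [hσ0] at this
      exact this
    · intro n
      rcases Nat.even_or_odd n with ⟨m, hm⟩ | ⟨m, hm⟩
      · subst hm
        left
        have e3 : m + m + 1 = 2 * m + 1 := by omega
        refine ⟨σ m, (Q m).2, hpe m, ?_⟩
        rw [e3, hpo m]
      · subst hm
        right
        have e3 : 2 * m + 1 + 1 = (m + 1) + (m + 1) := by omega
        rw [hpo m, e3, hpe (m + 1), hσs m]
        exact hχ (Q m)
  have hfol : Follows χ play := by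
    intro n q hq
    rcases Nat.even_or_odd n with ⟨m, hm⟩ | ⟨m, hm⟩ <;> subst hm
    · rw [hpe m] at hq
      exact absurd hq (by simp)
    · rw [hpo m] at hq
      have hqe : Q m = q := by
        injection hq
      have e3 : 2 * m + 1 + 1 = (m + 1) + (m + 1) := by omega
      rw [e3, hpe (m + 1), hσs m, hqe]
  have hnb : ∀ n, ¬ BadState ξ φ (σ n) := by
    intro n
    exact hwin play hisplay hfol (n + n) (σ n) (hpe n)
  refine ⟨tE, fun i' => ?_, ?_⟩
  · exact hgtr _
  intro j hobs
  set P : Fin k → ℕ → Prop := fun i p => ξ i (Tr' i p) with hP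
  have hcard : ∀ i, ∀ hf : (setOf (P i)).Finite, j < hf.toFinset.card := by
    intro i hf
    obtain ⟨f, hfm, hfo⟩ := hobs i
    have hle : (Finset.univ : Finset (Fin (j + 1))).card ≤ hf.toFinset.card := by
      apply Finset.card_le_card_of_injOn f
      · intro a _
        rw [Set.Finite.coe_toFinset]
        exact hfo a
      · exact hfm.injective.injOn
    have h2 : j + 1 ≤ hf.toFinset.card := by simpa using hle
    omega
  set glob : ℕ → Prop := fun n => ∀ i, ξ i (σ n i) with hglob
  set g : ℕ → ℕ := fun n => ((Finset.range n).filter glob).card with hg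
  have hgsucc : ∀ n, g (n + 1) = if glob n then g n + 1 else g n := by
    intro n
    show ((Finset.range (n + 1)).filter glob).card = _
    rw [Finset.range_add_one, Finset.filter_insert]
    by_cases hn : glob n
    · rw [if_pos hn, if_pos hn, Finset.card_insert_of_notMem (by simp)]
    · rw [if_neg hn, if_neg hn]
  have hgmono : Monotone g := by
    apply monotone_nat_of_le_succ
    intro n
    rw [hgsucc n]
    split <;> omega
  have hcount : ∀ n i, Nat.count (P i) (c n i) = g n := by
    intro n
    induction n with
    | zero =>
      intro i
      simp [hg, hc0 i]
    | succ n ih =>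
      intro i
      have hval := hMval (Q n)
      by_cases hgn : glob n
      · have hMuniv : i ∈ Msel (Q n) := by
          rcases hval with hv | hv
          · obtain ⟨i0, hi0⟩ := hMne (Q n)
            exact absurd (hgn i0) (hv i0 hi0)
          · rw [hv.1]; trivial
        have hP : P i (c n i) := by
          show ξ i (Tr' i (c n i))
          rw [← htreq n i]
          exact hgn i
        rw [(hinc n i).1 hMuniv, Nat.count_succ, if_pos hP, ih i, hgsucc n, if_pos hgn]
      · have hMnobs : ∀ i' ∈ Msel (Q n), ¬ ξ i' (σ n i') := by
          rcases hval with hv | hv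
          · exact hv
          · exact absurd hv.2 hgn
        by_cases him : i ∈ Msel (Q n)
        · have hP : ¬ P i (c n i) := by
            show ¬ ξ i (Tr' i (c n i))
            rw [← htreq n i]
            exact hMnobs i him
          rw [(hinc n i).1 him, Nat.count_succ, if_neg hP, ih i, hgsucc n, if_neg hgn]
          omega
        · rw [(hstay n i him).2, ih i, hgsucc n, if_neg hgn]
  have hbig : ∃ n, j < g n := by
    by_contra hno
    push_neg at hno
    have hbdd : BddAbove (Set.range g) := ⟨j, by rintro x ⟨n, rfl⟩; exact hno n⟩
    obtain ⟨N, hN⟩ := Nat.sSup_mem (Set.range_nonempty g) hbdd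
    have hmax : ∀ m', g m' ≤ g N := fun m' => hN ▸ le_csSup hbdd ⟨m', rfl⟩
    have hstab : ∀ m', N ≤ m' → g m' = g N := fun m' hm' =>
      le_antisymm (hmax m') (hgmono hm')
    have hnog : ∀ m', N ≤ m' → ¬ glob m' := by
      intro m' hm' hg'
      have h1 := hgsucc m'
      rw [if_pos hg', hstab m' hm', hstab (m' + 1) (by omega)] at h1
      omega
    choose f hf using fun n => hMne (Q n)
    obtain ⟨istar, hib'⟩ := Finite.exists_infinite_fiber f
    have hib : (f ⁻¹' {istar}).Infinite := by
      exact (Set.infinite_coe_iff (s := f ⁻¹' {istar})).mp hib'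
    have hub : ∀ B, ∃ n, N ≤ n ∧ B ≤ c n istar := by
      intro B
      induction B with
      | zero => exact ⟨N, le_refl N, Nat.zero_le _⟩
      | succ B ih =>
        obtain ⟨n, hn1, hn2⟩ := ih
        obtain ⟨m', hm1, hm2⟩ := hib.exists_gt n
        have him : istar ∈ Msel (Q m') := by
          have h3 := hf m'
          rwa [show f m' = istar from hm1] at h3
        refine ⟨m' + 1, by omega, ?_⟩
        rw [(hinc m' istar).1 him]
        have h4 : c n istar ≤ c m' istar := hcmono istar (le_of_lt hm2)
        omega
    have hexact : ∀ p, c N istar ≤ p →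
        ∃ m', N ≤ m' ∧ c m' istar = p ∧ istar ∈ Msel (Q m') := by
      intro p hp
      obtain ⟨n0, hn01, hn02⟩ := hub (p + 1)
      have hex : ∃ n, p + 1 ≤ c n istar := ⟨n0, hn02⟩
      have hsp : p + 1 ≤ c (Nat.find hex) istar := Nat.find_spec hex
      have hn1pos : Nat.find hex ≠ 0 := by
        intro h0
        rw [h0, hc0] at hsp
        omega
      have hprev : ¬ p + 1 ≤ c (Nat.find hex - 1) istar := Nat.find_min hex (by omega)
      have hstep1 : c (Nat.find hex - 1 + 1) istar ≤ c (Nat.find hex - 1) istar + 1 := by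
        rw [hcs]
        split <;> omega
      have he1 : Nat.find hex - 1 + 1 = Nat.find hex := by omega
      rw [he1] at hstep1
      have hcp : c (Nat.find hex - 1) istar = p := by omega
      have him : istar ∈ Msel (Q (Nat.find hex - 1)) := by
        by_contra hno'
        have h5 := (hstay (Nat.find hex - 1) istar hno').2
        rw [he1] at h5
        omega
      refine ⟨Nat.find hex - 1, ?_, hcp, him⟩
      by_contra hlt
      push_neg at hlt
      have h3 : c (Nat.find hex) istar ≤ c N istar := hcmono istar (by omega)
      omega
    have hnoP : ∀ p, c N istar ≤ p → ¬ P istar p := by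
      intro p hp hPp
      obtain ⟨m', hm1, hm2, hm3⟩ := hexact p hp
      have hval := hMval (Q m')
      have hxi : ¬ ξ istar (σ m' istar) := by
        rcases hval with hv | hv
        · exact hv istar hm3
        · exact absurd hv.2 (hnog m' hm1)
      apply hxi
      rw [htreq m' istar, hm2]
      exact hPp
    have hsub : setOf (P istar) ⊆ Set.Iio (c N istar) := by
      intro p hPp
      by_contra hge
      simp only [Set.mem_Iio, not_lt] at hge
      exact hnoP p hge hPp
    have hfin' : (setOf (P istar)).Finite := (Set.finite_Iio _).subset hsub
    have hcard' := hcard istar hfin'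
    have hle : hfin'.toFinset ⊆ (Finset.range (c N istar)).filter (P istar) := by
      intro p hp
      rw [Set.Finite.mem_toFinset] at hp
      rw [Finset.mem_filter, Finset.mem_range]
      exact ⟨hsub hp, hp⟩
    have h6 := Finset.card_le_card hle
    rw [← Nat.count_eq_card_filter_range, hcount N istar] at h6
    have h7 := hno N
    omega
  have hfin : ∃ n, glob n ∧ g n = j := by
    have hsp : j < g (Nat.find hbig) := Nat.find_spec hbig
    have hne : Nat.find hbig ≠ 0 := by
      intro h0
      rw [h0] at hsp
      have hg0 : g 0 = 0 := by simp [hg]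
      omega
    have hmin : ¬ j < g (Nat.find hbig - 1) := Nat.find_min hbig (by omega)
    have h1 := hgsucc (Nat.find hbig - 1)
    rw [show Nat.find hbig - 1 + 1 = Nat.find hbig by omega] at h1
    by_cases hgm : glob (Nat.find hbig - 1)
    · rw [if_pos hgm] at h1
      exact ⟨Nat.find hbig - 1, hgm, by omega⟩
    · rw [if_neg hgm] at h1
      omega
  obtain ⟨m, hgm, hgj⟩ := hfin
  have hkey : ∀ i, Nat.nth (P i) j = c m i := by
    intro i
    have hP : P i (c m i) := by
      show ξ i (Tr' i (c m i))
      rw [← htreq m i]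
      exact hgm i
    have h1 := Nat.nth_count hP
    rwa [hcount m i, hgj] at h1
  have hfun : (fun i => obsState (ξ i) (finSplice h tA tE i) j) = σ m := by
    funext i
    show (finSplice h tA tE i) (Nat.nth (fun p => ξ i (finSplice h tA tE i p)) j) = σ m i
    have he : (fun p => ξ i (finSplice h tA tE i p)) = P i := rfl
    rw [he, hkey i]
    exact (htreq m i).symm
  rw [hfun]
  have := hnb m
  simp only [BadState, not_and, not_not] at this
  exact this hgm
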